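/- Let B_m denote the closed unit ball in ℝ^m. Suppose o : Θ → ℝ^N and r : Θ × B_m → [0,∞) are both L₀-Lipschitz in z ∈ ℝ^m (uniformly in other variables), and r is continuous in ζ ∈ B_m. Then the set-valued map H(t,x,z) := { o(t,x,z) + ι·r(t,x,z,ζ)·ζ : ζ ∈ B_m, 0 ≤ ι ≤ 1 } is 2L₀-separable, i.e., there is a countable family of functions Θ → ℝ^N, each 2L₀-Lipschitz in z, whose pointwise closure equals H. -/

import Mathlib

/-- the set-valued map
`H(t,x,z) = { o(t,x,z) + ι r(t,x,z,ζ) ζ : ζ ∈ B̄(0,1), 0 ≤ ι ≤ 1 }`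
(with `o`, `r(·,ζ)` `L₀`-Lipschitz in `z` and `r` continuous in `ζ`) is
`2L₀`-separable: there is a countable family of `2L₀`-Lipschitz-in-`z`
selectors whose pointwise closure equals `H`. -/
theorem stmt4 {d m : ℕ} (L₀ : NNReal)
    (o : ℝ → EuclideanSpace ℝ (Fin d) → EuclideanSpace ℝ (Fin m) →
      EuclideanSpace ℝ (Fin m))
    (r : ℝ → EuclideanSpace ℝ (Fin d) → EuclideanSpace ℝ (Fin m) →
      EuclideanSpace ℝ (Fin m) → ℝ)
    (hr_nonneg : ∀ t x z ζ, 0 ≤ r t x z ζ)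
    (ho_lip : ∀ t x, LipschitzWith L₀ (o t x))
    (hr_lip : ∀ t x ζ, ζ ∈ Metric.closedBall (0 : EuclideanSpace ℝ (Fin m)) 1 →
      LipschitzWith L₀ (fun z => r t x z ζ))
    (hr_cont : ∀ t x z, ContinuousOn (fun ζ => r t x z ζ)
      (Metric.closedBall (0 : EuclideanSpace ℝ (Fin m)) 1)) :
    ∃ Hk : ℕ → ℝ → EuclideanSpace ℝ (Fin d) → EuclideanSpace ℝ (Fin m) →
        EuclideanSpace ℝ (Fin m),
      (∀ k t x, LipschitzWith (2 * L₀) (Hk k t x)) ∧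
      ∀ t x z,
        {y : EuclideanSpace ℝ (Fin m) |
            ∃ ζ ∈ Metric.closedBall (0 : EuclideanSpace ℝ (Fin m)) 1,
              ∃ ι ∈ Set.Icc (0:ℝ) 1, y = o t x z + (ι * r t x z ζ) • ζ}
          = closure (Set.range fun k => Hk k t x z) := by
  classical
  set B : Set (EuclideanSpace ℝ (Fin m)) := Metric.closedBall 0 1 with hB
  set K : Set (EuclideanSpace ℝ (Fin m) × ℝ) := B ×ˢ Set.Icc (0:ℝ) 1 with hK
  have hK0 : ((0 : EuclideanSpace ℝ (Fin m)), (0:ℝ)) ∈ K := by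
    constructor
    · simp [hB]
    · exact ⟨le_refl 0, zero_le_one⟩
  have : Nonempty ↥K := ⟨⟨_, hK0⟩⟩
  obtain ⟨u, hu⟩ := TopologicalSpace.exists_dense_seq ↥K
  refine ⟨fun k t x z => o t x z + (((u k : EuclideanSpace ℝ (Fin m) × ℝ).2) * r t x z (u k : EuclideanSpace ℝ (Fin m) × ℝ).1) • (u k : EuclideanSpace ℝ (Fin m) × ℝ).1,
    ?_, ?_⟩
  · intro k t x
    have hζ : (u k : EuclideanSpace ℝ (Fin m) × ℝ).1 ∈ B := (u k).2.1
    have hι : (u k : EuclideanSpace ℝ (Fin m) × ℝ).2 ∈ Set.Icc (0:ℝ) 1 := (u k).2.2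
    have h1 : LipschitzWith L₀ (fun z => ((u k : EuclideanSpace ℝ (Fin m) × ℝ).2 * r t x z (u k : EuclideanSpace ℝ (Fin m) × ℝ).1) • (u k : EuclideanSpace ℝ (Fin m) × ℝ).1) := by
      intro z₁ z₂
      have := (hr_lip t x _ hζ) z₁ z₂
      calc edist (((u k : EuclideanSpace ℝ (Fin m) × ℝ).2 * r t x z₁ (u k : EuclideanSpace ℝ (Fin m) × ℝ).1) • (u k : EuclideanSpace ℝ (Fin m) × ℝ).1)
              (((u k : EuclideanSpace ℝ (Fin m) × ℝ).2 * r t x z₂ (u k : EuclideanSpace ℝ (Fin m) × ℝ).1) • (u k : EuclideanSpace ℝ (Fin m) × ℝ).1)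
          = ENNReal.ofReal (‖((u k : EuclideanSpace ℝ (Fin m) × ℝ).2 * r t x z₁ (u k : EuclideanSpace ℝ (Fin m) × ℝ).1 - (u k : EuclideanSpace ℝ (Fin m) × ℝ).2 * r t x z₂ (u k : EuclideanSpace ℝ (Fin m) × ℝ).1)‖ * ‖(u k : EuclideanSpace ℝ (Fin m) × ℝ).1‖) := by
            rw [edist_dist, dist_eq_norm, ← sub_smul, norm_smul]
        _ ≤ ENNReal.ofReal (dist (r t x z₁ (u k : EuclideanSpace ℝ (Fin m) × ℝ).1) (r t x z₂ (u k : EuclideanSpace ℝ (Fin m) × ℝ).1)) := by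
            apply ENNReal.ofReal_le_ofReal
            rw [dist_eq_norm]
            have h2 : ‖(u k : EuclideanSpace ℝ (Fin m) × ℝ).2 * r t x z₁ (u k : EuclideanSpace ℝ (Fin m) × ℝ).1 - (u k : EuclideanSpace ℝ (Fin m) × ℝ).2 * r t x z₂ (u k : EuclideanSpace ℝ (Fin m) × ℝ).1‖
                ≤ ‖r t x z₁ (u k : EuclideanSpace ℝ (Fin m) × ℝ).1 - r t x z₂ (u k : EuclideanSpace ℝ (Fin m) × ℝ).1‖ := by
              rw [← mul_sub, norm_mul]
              have : ‖(u k : EuclideanSpace ℝ (Fin m) × ℝ).2‖ ≤ 1 := by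
                rw [Real.norm_eq_abs, abs_le]; exact ⟨le_trans (by norm_num) hι.1, hι.2⟩
              nlinarith [norm_nonneg (r t x z₁ (u k : EuclideanSpace ℝ (Fin m) × ℝ).1 - r t x z₂ (u k : EuclideanSpace ℝ (Fin m) × ℝ).1)]
            have h3 : ‖(u k : EuclideanSpace ℝ (Fin m) × ℝ).1‖ ≤ 1 := by
              simpa [hB] using hζ
            nlinarith [norm_nonneg ((u k : EuclideanSpace ℝ (Fin m) × ℝ).2 * r t x z₁ (u k : EuclideanSpace ℝ (Fin m) × ℝ).1 - (u k : EuclideanSpace ℝ (Fin m) × ℝ).2 * r t x z₂ (u k : EuclideanSpace ℝ (Fin m) × ℝ).1), norm_nonneg (r t x z₁ (u k : EuclideanSpace ℝ (Fin m) × ℝ).1 - r t x z₂ (u k : EuclideanSpace ℝ (Fin m) × ℝ).1)]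
        _ = edist (r t x z₁ (u k : EuclideanSpace ℝ (Fin m) × ℝ).1) (r t x z₂ (u k : EuclideanSpace ℝ (Fin m) × ℝ).1) := (edist_dist _ _).symm
        _ ≤ L₀ * edist z₁ z₂ := this
    have := (ho_lip t x).add h1
    simpa [two_mul] using this
  · intro t x z
    -- the map on the compact set
    set g : ↥K → EuclideanSpace ℝ (Fin m) :=
      fun p => o t x z + ((p : EuclideanSpace ℝ (Fin m) × ℝ).2 * r t x z (p : EuclideanSpace ℝ (Fin m) × ℝ).1) • (p : EuclideanSpace ℝ (Fin m) × ℝ).1 with hg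
    have hgc : Continuous g := by
      apply Continuous.add continuous_const
      apply Continuous.fun_smul
      · apply Continuous.mul
        · exact (continuous_snd.comp continuous_subtype_val)
        · exact (hr_cont t x z).comp_continuous
            (continuous_fst.comp continuous_subtype_val) (fun p => p.2.1)
      · exact continuous_fst.comp continuous_subtype_val
    have hSg : {y : EuclideanSpace ℝ (Fin m) |
            ∃ ζ ∈ Metric.closedBall (0 : EuclideanSpace ℝ (Fin m)) 1,
              ∃ ι ∈ Set.Icc (0:ℝ) 1, y = o t x z + (ι * r t x z ζ) • ζ} = Set.range g := by
      ext y
      constructor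
      · rintro ⟨ζ, hζ, ι, hι, rfl⟩
        exact ⟨⟨(ζ, ι), ⟨hζ, hι⟩⟩, rfl⟩
      · rintro ⟨⟨⟨ζ, ι⟩, hp⟩, rfl⟩
        exact ⟨ζ, hp.1, ι, hp.2, rfl⟩
    have hKcomp : IsCompact K := (isCompact_closedBall _ _).prod isCompact_Icc
    have : CompactSpace ↥K := isCompact_iff_compactSpace.mp hKcomp
    have hclosed : IsClosed (Set.range g) := (isCompact_range hgc).isClosed
    have hsub1 : closure (Set.range (g ∘ u)) ⊆ Set.range g :=
      hclosed.closure_subset_iff.mpr (Set.range_comp_subset_range u g)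
    have hsub2 : Set.range g ⊆ closure (Set.range (g ∘ u)) := by
      rintro y ⟨p, rfl⟩
      have : g p ∈ g '' closure (Set.range u) := ⟨p, by rw [hu.closure_range]; trivial, rfl⟩
      have := (image_closure_subset_closure_image hgc) this
      simpa [Set.image_univ, Set.range_comp] using this
    rw [hSg]
    have : (Set.range fun k => g (u k)) = Set.range (g ∘ u) := rfl
    rw [hg]
    simp only []
    exact (subset_antisymm hsub2 hsub1)
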